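/- Let n ≥ 1, r > 0, and let F : ℤ² → GL(n,ℂ) satisfy F(y) = I for all y ∉ B_r ∩ ℤ². Let z ∈ B_r ∩ ℤ² be of maximal norm, i.e. |z| ≥ |ζ| for all ζ ∈ B_r ∩ ℤ². Then S(F)(γ_z) = F(z). -/

import Mathlib

noncomputable section

open Matrix

/-- Embedding of the lattice `ℤ^d` into Euclidean `ℝ^d`. -/
def emb {d : ℕ} (z : Fin d → ℤ) : EuclideanSpace ℝ (Fin d) := WithLp.toLp 2 (fun i => (z i : ℝ))

/- Ordered product of `Φ` over `supp`: the factors are multiplied so that larger values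
of `key` contribute factors further to the left (the value is `1` if no strictly
`key`-decreasing enumeration of `supp` by a list exists). -/
open Classical in
noncomputable def oprodBy {α G : Type*} [Monoid G] (Φ : α → G) (key : α → ℝ) (supp : Set α) : G :=
  if h : ∃ l : List α, l.Pairwise (fun a b => key b < key a) ∧ ∀ a, a ∈ l ↔ a ∈ supp
  then (h.choose.map Φ).prod else 1

/-- The discrete non-abelian X-ray transform of `F` along the oriented line through `x`
with direction `θ`: the ordered product of `F y` over lattice points `y` on the line,
the point furthest along the orientation contributing the leftmost factor. -/
noncomputable def discS {d : ℕ} {G : Type*} [Monoid G] (F : (Fin d → ℤ) → G)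
    (x θ : EuclideanSpace ℝ (Fin d)) : G :=
  oprodBy F (fun z => ∑ i, ((z i : ℝ) - x i) * θ i)
    {z | (∃ t : ℝ, emb z = x + t • θ) ∧ F z ≠ 1}
/-- The direction of the rational ray γ_z in ℝ²: for z ≠ 0 it is (−z₂, z₁)/|z|, and for
z = 0 it is a fixed rational direction θ₀. -/
def rayDir (θ₀ : EuclideanSpace ℝ (Fin 2)) (z : Fin 2 → ℤ) : EuclideanSpace ℝ (Fin 2) :=
  if z = 0 then θ₀ else ‖emb z‖⁻¹ • emb ![-(z 1), z 0]


lemma sorted_unique {α : Type*} (key : α → ℝ) (l₁ l₂ : List α)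
    (h₁ : l₁.Pairwise (fun a b => key b < key a)) (h₂ : l₂.Pairwise (fun a b => key b < key a))
    (hm : ∀ a, a ∈ l₁ ↔ a ∈ l₂) : l₁ = l₂ := by
  haveI : IsAntisymm α (fun a b => key b < key a) :=
    ⟨fun a b h h' => absurd (h.trans h') (lt_irrefl _)⟩
  have hn₁ : l₁.Nodup := h₁.imp fun hab => fun e => absurd hab (e ▸ lt_irrefl _)
  have hn₂ : l₂.Nodup := h₂.imp fun hab => fun e => absurd hab (e ▸ lt_irrefl _)
  exact List.Perm.eq_of_pairwise' h₁ h₂ ((List.perm_ext_iff_of_nodup hn₁ hn₂).2 hm)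

lemma oprodBy_eq {α G : Type*} [Monoid G] (Φ : α → G) (key : α → ℝ) (supp : Set α)
    (l : List α) (hp : l.Pairwise (fun a b => key b < key a)) (hm : ∀ a, a ∈ l ↔ a ∈ supp) :
    oprodBy Φ key supp = (l.map Φ).prod := by
  have h : ∃ l : List α, l.Pairwise (fun a b => key b < key a) ∧ ∀ a, a ∈ l ↔ a ∈ supp :=
    ⟨l, hp, hm⟩
  rw [oprodBy, dif_pos h]
  show (h.choose.map Φ).prod = _
  have heq : h.choose = l :=
    sorted_unique key _ _ h.choose_spec.1 hp
      (fun a => (h.choose_spec.2 a).trans (hm a).symm)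
  rw [heq]

lemma oprodBy_empty {α G : Type*} [Monoid G] (Φ : α → G) (key : α → ℝ) :
    oprodBy Φ key (∅ : Set α) = 1 := by
  rw [oprodBy_eq Φ key ∅ [] (by simp) (by simp)]; simp

lemma oprodBy_singleton {α G : Type*} [Monoid G] (Φ : α → G) (key : α → ℝ) (c : α) :
    oprodBy Φ key ({c} : Set α) = Φ c := by
  rw [oprodBy_eq Φ key {c} [c] (by simp) (by simp)]; simp

lemma emb_inj {d : ℕ} {y z : Fin d → ℤ} (h : emb y = emb z) : y = z := by
  funext i
  have := congrArg (fun v => v i) h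
  simp only [emb, PiLp.toLp_apply] at this
  exact_mod_cast this

lemma ray_support {n : ℕ} (r : ℝ)
    (F : (Fin 2 → ℤ) → GL (Fin n) ℂ) (hF : ∀ y : Fin 2 → ℤ, ¬ ‖emb y‖ ≤ r → F y = 1)
    (z : Fin 2 → ℤ) (θ₀ : EuclideanSpace ℝ (Fin 2))
    (hmax : ∀ ζ : Fin 2 → ℤ, ‖emb ζ‖ ≤ r → ‖emb ζ‖ ≤ ‖emb z‖) :
    ∀ y : Fin 2 → ℤ, (∃ t : ℝ, emb y = emb z + t • rayDir θ₀ z) → F y ≠ 1 → y = z := by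
  intro y hy hFy
  obtain ⟨t, ht⟩ := hy
  have hyr : ‖emb y‖ ≤ r := by by_contra h; exact hFy (hF y h)
  have hyz : ‖emb y‖ ≤ ‖emb z‖ := hmax y hyr
  by_cases h0 : z = 0
  · subst h0
    have hz0 : emb (0 : Fin 2 → ℤ) = 0 := by ext i; simp [emb]
    rw [hz0, norm_zero] at hyz
    have : emb y = 0 := norm_le_zero_iff.1 hyz
    exact emb_inj (this.trans hz0.symm)
  · have hzpos : 0 < ‖emb z‖ := by
      rw [norm_pos_iff]
      have e0 : emb (0 : Fin 2 → ℤ) = 0 := by ext i; simp [emb]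
      exact fun h => h0 (emb_inj (h.trans e0.symm))
    set w : Fin 2 → ℤ := ![-(z 1), z 0] with hw
    have hnw : ‖emb w‖ = ‖emb z‖ := by
      simp only [EuclideanSpace.norm_eq, Fin.sum_univ_two, emb, hw]
      norm_num [Real.norm_eq_abs, sq_abs]
      ring_nf
    have hinner : inner ℝ (emb z) (emb w) = (0 : ℝ) := by
      simp only [PiLp.inner_apply, Fin.sum_univ_two, emb, hw, RCLike.inner_apply,
        starRingEnd_apply, star_trivial]
      simp
      ring
    rw [rayDir, if_neg h0] at ht
    have hθn : ‖(‖emb z‖⁻¹ • emb w : EuclideanSpace ℝ (Fin 2))‖ = 1 := by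
      rw [norm_smul, hnw, norm_inv, Real.norm_eq_abs, abs_of_pos hzpos,
        inv_mul_cancel₀ (ne_of_gt hzpos)]
    have hinner2 : inner ℝ (emb z) (t • (‖emb z‖⁻¹ • emb w) : EuclideanSpace ℝ (Fin 2)) = (0:ℝ) := by
      rw [real_inner_smul_right, real_inner_smul_right, hinner]
      ring
    have hsq : ‖emb y‖ ^ 2 = ‖emb z‖ ^ 2 + t ^ 2 := by
      rw [ht, norm_add_sq_real, hinner2, norm_smul, hθn]
      simp [Real.norm_eq_abs, sq_abs]
    have ht0 : t = 0 := by
      have h1 : ‖emb y‖ ^ 2 ≤ ‖emb z‖ ^ 2 := by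
        apply pow_le_pow_left₀ (norm_nonneg _) hyz
      nlinarith [sq_nonneg t]
    rw [ht0] at ht
    simp at ht
    exact emb_inj ht

/-- if F = I outside B_r ∩ ℤ² and z is a lattice point of B_r of maximal
norm, then the discrete non-abelian X-ray transform along the rational ray γ_z
equals F z. -/
theorem stmt4 (n : ℕ) (hn : 1 ≤ n) (r : ℝ) (hr : 0 < r)
    (F : (Fin 2 → ℤ) → GL (Fin n) ℂ) (hF : ∀ y : Fin 2 → ℤ, ¬ ‖emb y‖ ≤ r → F y = 1)
    (θ₀ : EuclideanSpace ℝ (Fin 2))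
    (hθ₀ : ∃ w : Fin 2 → ℤ, w ≠ 0 ∧ θ₀ = ‖emb w‖⁻¹ • emb w)
    (z : Fin 2 → ℤ) (hz : ‖emb z‖ ≤ r)
    (hmax : ∀ ζ : Fin 2 → ℤ, ‖emb ζ‖ ≤ r → ‖emb ζ‖ ≤ ‖emb z‖) :
    discS F (emb z) (rayDir θ₀ z) = F z := by
  have hsub := ray_support r F hF z θ₀ hmax
  by_cases hFz : F z = 1
  · have hS : {y : Fin 2 → ℤ | (∃ t : ℝ, emb y = emb z + t • rayDir θ₀ z) ∧ F y ≠ 1}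
        = (∅ : Set (Fin 2 → ℤ)) := by
      ext y
      simp only [Set.mem_setOf_eq, Set.mem_empty_iff_false, iff_false, not_and, not_not]
      intro hl
      by_contra hne
      rw [hsub y hl hne] at hne
      exact hne hFz
    rw [discS, hS, oprodBy_empty, hFz]
  · have hS : {y : Fin 2 → ℤ | (∃ t : ℝ, emb y = emb z + t • rayDir θ₀ z) ∧ F y ≠ 1}
        = ({z} : Set (Fin 2 → ℤ)) := by
      ext y
      constructor
      · rintro ⟨hl, hne⟩
        exact hsub y hl hne
      · rintro rfl
        exact ⟨⟨0, by simp⟩, hFz⟩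
    rw [discS, hS, oprodBy_singleton]
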